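/- If f : [0,1] → ℝ² is Hölder continuous with exponent r > 1/2, then the image f([0,1]) has two-dimensional Lebesgue measure zero. -/

import Mathlib

set_option maxHeartbeats 1000000

open MeasureTheory
open scoped NNReal ENNReal

/-- Volume on `EuclideanSpace ℝ (Fin 2)` is absolutely continuous with respect to the
2-dimensional Hausdorff measure. -/
lemma volume_ac_hausdorff_euclid2 :
    (volume : Measure (EuclideanSpace ℝ (Fin 2))) ≪ μH[2] := by
  refine Measure.AbsolutelyContinuous.mk fun A _ hA => ?_
  set e := (MeasurableEquiv.toLp 2 (Fin 2 → ℝ)).symm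
  have h1 : (volume : Measure (EuclideanSpace ℝ (Fin 2))) =
      Measure.map e.symm volume :=
    ((EuclideanSpace.volume_preserving_symm_measurableEquiv_toLp (Fin 2)).symm).map_eq.symm
  have h2 : volume A = volume (e '' A) := by
    rw [h1, e.symm.map_apply, MeasurableEquiv.image_eq_preimage_symm]
  have hLip : LipschitzWith 1 (WithLp.equiv 2 (Fin 2 → ℝ)) := PiLp.lipschitzWith_ofLp 2 _
  have h3 : (μH[2] : Measure (Fin 2 → ℝ)) (e '' A) ≤ (1 : ℝ≥0) ^ (2:ℝ) * μH[2] A := by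
    exact hLip.hausdorffMeasure_image_le (by norm_num) A
  have h4 : (volume : Measure (Fin 2 → ℝ)) = μH[2] := by
    have := MeasureTheory.hausdorffMeasure_pi_real (ι := Fin 2)
    simp only [Fintype.card_fin] at this
    rw [← this]; norm_num
  rw [h2, h4]
  refine le_antisymm ?_ zero_le
  calc (μH[2] : Measure (Fin 2 → ℝ)) (e '' A) ≤ (1 : ℝ≥0) ^ (2:ℝ) * μH[2] A := h3
    _ = 0 := by rw [hA]; simp

/-- if `f : [0,1] → ℝ²` is Hölder continuous with exponent
`r > 1/2`, then the image `f([0,1])` has two-dimensional Lebesgue measure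
zero. -/
theorem holder_image_measure_zero (r : ℝ) (hr : 1 / 2 < r)
    (f : ℝ → EuclideanSpace ℝ (Fin 2)) (C : ℝ)
    (hf : ∀ x ∈ Set.Icc (0 : ℝ) 1, ∀ y ∈ Set.Icc (0 : ℝ) 1,
      ‖f x - f y‖ ≤ C * |x - y| ^ r) :
    volume (f '' Set.Icc (0 : ℝ) 1) = 0 := by
  have hr0 : (0:ℝ) < r := by linarith
  -- f is Hölder on Icc with nonneg constant
  have hH : HolderOnWith C.toNNReal r.toNNReal f (Set.Icc 0 1) := by
    intro x hx y hy
    rw [edist_dist, edist_dist, Real.dist_eq, dist_eq_norm,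
      ENNReal.ofReal_rpow_of_nonneg (abs_nonneg _) r.toNNReal.coe_nonneg,
      ← ENNReal.ofReal_coe_nnreal, ← ENNReal.ofReal_mul (by positivity)]
    apply ENNReal.ofReal_le_ofReal
    calc ‖f x - f y‖ ≤ C * |x - y| ^ r := hf x hx y hy
      _ ≤ (C.toNNReal : ℝ) * |x - y| ^ r :=
          mul_le_mul_of_nonneg_right (Real.le_coe_toNNReal C) (by positivity)
      _ = (C.toNNReal : ℝ) * |x - y| ^ (r.toNNReal : ℝ) := by
          rw [Real.coe_toNNReal r hr0.le]
  have hrpos : (0 : ℝ≥0) < r.toNNReal := by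
    simpa using Real.toNNReal_pos.mpr hr0
  have hdim : dimH (f '' Set.Icc (0:ℝ) 1) < (2 : ℝ≥0) := by
    calc dimH (f '' Set.Icc (0:ℝ) 1) ≤ dimH (Set.Icc (0:ℝ) 1) / r.toNNReal :=
          hH.dimH_image_le hrpos
      _ ≤ 1 / (r.toNNReal : ℝ≥0∞) := by
          gcongr
          calc dimH (Set.Icc (0:ℝ) 1) ≤ dimH (Set.univ : Set ℝ) := dimH_mono (Set.subset_univ _)
            _ = 1 := Real.dimH_univ
      _ < 2 := by
          rw [ENNReal.div_lt_iff (by simp [hrpos.ne']) (by simp)]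
          have h12 : (1/2 : ℝ≥0) < r.toNNReal := by
            rw [← NNReal.coe_lt_coe, Real.coe_toNNReal r hr0.le]
            push_cast; linarith
          calc (1 : ℝ≥0∞) = 2 * (1/2 : ℝ≥0) := by
                rw [← ENNReal.coe_ofNat, ← ENNReal.coe_mul]; norm_num
            _ < 2 * r.toNNReal := by
                refine ENNReal.mul_lt_mul_iff_right (by norm_num) (by norm_num) |>.mpr ?_
                exact_mod_cast h12
  have h0 : (μH[((2:ℝ≥0):ℝ)] : Measure (EuclideanSpace ℝ (Fin 2)))
      (f '' Set.Icc (0:ℝ) 1) = 0 := hausdorffMeasure_of_dimH_lt hdim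
  rw [show ((2:ℝ≥0):ℝ) = (2:ℝ) by norm_num] at h0
  exact volume_ac_hausdorff_euclid2 h0
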